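/- The one-site Fermi Ornstein–Uhlenbeck generator L⁰ is symmetric with respect to the GNS inner product induced by the free-fermion state: with ρ_h = diag(1, e^h) / (1 + e^h), one has tr( ρ_h (L⁰ x)* y ) = tr( ρ_h x* (L⁰ y) ) for all x, y ∈ M₂(ℂ). -/

import Mathlib

open Matrix

set_option maxHeartbeats 2000000 in
/-- The one-site Fermi Ornstein–Uhlenbeck generator
`L⁰ f = e^{h/2}([v,f]v* + v[f,v*]) + e^{−h/2}([v*,f]v + v*[f,v])`, `v = [[0,1],[0,0]]`,
is symmetric with respect to the GNS inner product induced by the free-fermion state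
`ρ_h = diag(1, e^h)/(1 + e^h)`: `tr(ρ_h (L⁰ x)* y) = tr(ρ_h x* (L⁰ y))`. -/
theorem fermiOU_onesite_symmetric_GNS
    (h : ℝ) (v ρ : Matrix (Fin 2) (Fin 2) ℂ)
    (hv : v = !![0, 1; 0, 0])
    (hρ : ρ = ((1 + Real.exp h : ℝ) : ℂ)⁻¹ • !![1, 0; 0, ((Real.exp h : ℝ) : ℂ)])
    (L0 : Matrix (Fin 2) (Fin 2) ℂ → Matrix (Fin 2) (Fin 2) ℂ)
    (hL0 : ∀ f,
      L0 f =
        ((Real.exp (h / 2) : ℝ) : ℂ) •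
            ((v * f - f * v) * star v + v * (f * star v - star v * f))
        + ((Real.exp (-h / 2) : ℝ) : ℂ) •
            ((star v * f - f * star v) * v + star v * (f * v - v * f))) :
    ∀ x y : Matrix (Fin 2) (Fin 2) ℂ,
      (ρ * star (L0 x) * y).trace = (ρ * star x * L0 y).trace := by
  intro x y
  have e1 : Real.exp h = (Real.exp (h/2))^2 := by
    rw [sq, ← Real.exp_add, add_halves]
  have e2 : Real.exp (-(h/2)) = (Real.exp (h/2))⁻¹ := by
    rw [Real.exp_neg]
  have hpos : (Real.exp (h/2) : ℂ) ≠ 0 := by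
    exact_mod_cast (Real.exp_pos _).ne'
  subst hv hρ
  rw [hL0, hL0]
  simp only [trace_fin_two, mul_apply, Matrix.smul_apply, Matrix.add_apply, Matrix.sub_apply, star_apply,
    Fin.sum_univ_two, Matrix.cons_val', Matrix.cons_val_zero, Matrix.cons_val_one,
    Matrix.head_cons, Matrix.head_fin_const, Matrix.empty_val', Matrix.cons_val_fin_one,
    conjTranspose_apply, star_add, star_sub, star_mul', star_smul, e1, e2,
    Complex.ofReal_pow, Complex.ofReal_inv, smul_eq_mul, RCLike.star_def, map_inv₀,
    Complex.conj_ofReal, map_pow, Matrix.of_apply]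
  have hden : ((1:ℂ) + ((Real.exp (h/2) : ℝ) : ℂ)^2) ≠ 0 := by
    rw [show ((1:ℂ) + ((Real.exp (h/2) : ℝ) : ℂ)^2) = ((1 + Real.exp (h/2)^2 : ℝ) : ℂ) by
      push_cast; ring]
    exact_mod_cast (by positivity : (1 + Real.exp (h/2)^2 : ℝ) ≠ 0)
  field_simp
  simp only [map_zero, map_one, neg_div, Real.exp_neg, Complex.ofReal_inv]
  have hC : Complex.exp ((h:ℂ) / 2) ≠ 0 := Complex.exp_ne_zero _
  field_simp
  ring
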